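/- Let A ∈ ℝ^{n×n} be invertible with n ≥ 2, and set α = 1 / Tr(AᵀA) and X_0 = αAᵀ. Then ‖I − AX_0‖₂ < 1. -/

import Mathlib

open Matrix
open scoped Matrix.Norms.L2Operator

/-- The L2 operator norm of a real symmetric matrix is bounded by any bound on the
absolute values of its eigenvalues. -/
lemma aux_norm_le {n : ℕ} [NeZero n] (M : Matrix (Fin n) (Fin n) ℝ) (hM : M.IsHermitian)
    {c : ℝ} (hc : 0 ≤ c) (h : ∀ i, |hM.eigenvalues i| ≤ c) : ‖M‖ ≤ c := by
  rw [Matrix.cstar_norm_def]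
  refine ContinuousLinearMap.opNorm_le_bound _ hc fun x => ?_
  set T := toEuclideanCLM (n := Fin n) (𝕜 := ℝ) M with hT
  set b := hM.eigenvectorBasis with hb
  have hsym := (Matrix.isHermitian_iff_isSymmetric.1 hM)
  have hTb : ∀ j, T (b j) = hM.eigenvalues j • b j := by
    intro j
    have h1 := hM.mulVec_eigenvectorBasis j
    apply (WithLp.equiv 2 _).injective
    simp only [hT, WithLp.equiv_apply, ofLp_toEuclideanCLM, Matrix.toLin'_apply]
    ext k
    simpa using congrFun h1 k
  have key : ∀ i, b.repr (T x) i = hM.eigenvalues i * b.repr x i := by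
    intro i
    rw [b.repr_apply_apply, b.repr_apply_apply]
    have h2 : inner ℝ (b i) (T x) = (inner ℝ (T (b i)) x : ℝ) := by
      have := hsym (b i) x
      exact this.symm
    rw [h2, hTb i, inner_smul_left]
    simp
  have hn1 : ‖T x‖ = ‖b.repr (T x)‖ := (b.repr.norm_map _).symm
  have hn2 : ‖x‖ = ‖b.repr x‖ := (b.repr.norm_map _).symm
  rw [hn1, hn2, EuclideanSpace.norm_eq, EuclideanSpace.norm_eq]
  rw [← Real.sqrt_sq hc, ← Real.sqrt_mul (by positivity)]
  apply Real.sqrt_le_sqrt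
  rw [Finset.mul_sum]
  apply Finset.sum_le_sum
  intro i _
  rw [key i]
  have h3 : ‖hM.eigenvalues i * b.repr x i‖ ^ 2 = (hM.eigenvalues i)^2 * ‖b.repr x i‖^2 := by
    rw [norm_mul, mul_pow]; simp
  rw [h3]
  have hl : (hM.eigenvalues i)^2 ≤ c^2 := by
    rw [← sq_abs]; exact pow_le_pow_left₀ (abs_nonneg _) (h i) 2
  exact mul_le_mul_of_nonneg_right hl (by positivity)

/-- The trace of a real symmetric matrix equals the sum of its eigenvalues. -/
lemma aux_trace {n : ℕ} {B : Matrix (Fin n) (Fin n) ℝ} (hB : B.IsHermitian) :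
    B.trace = ∑ i, hB.eigenvalues i := by
  simpa using hB.trace_eq_sum_eigenvalues

/-- A matrix of the form `A * Aᵀ` with `A` invertible is positive definite. -/
lemma aux_posdef {n : ℕ} (A : Matrix (Fin n) (Fin n) ℝ) (hA : IsUnit A) :
    (A * Aᵀ).PosDef := by
  refine Matrix.PosDef.of_dotProduct_mulVec_pos ?_ ?_
  · simpa using Matrix.isHermitian_mul_conjTranspose_self A
  · intro x hx
    have hv : Aᵀ *ᵥ x ≠ 0 := fun hcon => hx <| by
      simpa using Matrix.mulVec_injective_iff_isUnit.2 ((Matrix.isUnit_transpose _).2 hA)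
        (by simpa using hcon)
    have heq : star x ⬝ᵥ ((A * Aᵀ) *ᵥ x) = (Aᵀ *ᵥ x) ⬝ᵥ (Aᵀ *ᵥ x) := by
      rw [← Matrix.mulVec_mulVec, star_trivial, Matrix.dotProduct_mulVec, ← Matrix.mulVec_transpose]
    rw [heq]
    have h0 : 0 ≤ (Aᵀ *ᵥ x) ⬝ᵥ (Aᵀ *ᵥ x) := Finset.sum_nonneg fun i _ => mul_self_nonneg _
    have hne : (Aᵀ *ᵥ x) ⬝ᵥ (Aᵀ *ᵥ x) ≠ 0 := fun hcon =>
      hv (dotProduct_self_eq_zero.1 hcon)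
    simpa using lt_of_le_of_ne h0 (Ne.symm hne)

/-- Every eigenvalue of `1 - B/tr B` for `B` positive definite, `n ≥ 2`, lies in `(-1, 1)`. -/
lemma aux_eig_bound {n : ℕ} (hn : 2 ≤ n) {B : Matrix (Fin n) (Fin n) ℝ} (hB : B.PosDef)
    {t : ℝ} (ht : 0 < t) (htr : B.trace = t)
    {M : Matrix (Fin n) (Fin n) ℝ} (hMdef : M = 1 - (1/t) • B) (hM : M.IsHermitian)
    (i : Fin n) : |hM.eigenvalues i| < 1 := by
  have := NeZero.of_pos (lt_of_lt_of_le two_pos hn)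
  have hnt : Nontrivial (Fin n) := Fin.nontrivial_iff_two_le.2 hn
  set x := hM.eigenvalues i with hx
  have hmem : x ∈ spectrum ℝ ((1 : Matrix (Fin n) (Fin n) ℝ) - (1/t) • B) := by
    rw [← hMdef]; exact hM.eigenvalues_mem_spectrum_real i
  rw [show (1 : Matrix (Fin n) (Fin n) ℝ) = algebraMap ℝ _ (1:ℝ) by simp,
    ← spectrum.singleton_sub_eq] at hmem
  obtain ⟨a, ha, b, hb, hab⟩ := Set.mem_sub.1 hmem
  rw [Set.mem_singleton_iff] at ha
  subst ha
  have hu : ((1/t : ℝ) • B) = (Units.mk0 (1/t) (by positivity) : ℝˣ) • B := rfl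
  rw [hu, spectrum.unit_smul_eq_smul, hB.1.spectrum_real_eq_range_eigenvalues] at hb
  obtain ⟨l, ⟨j, hj⟩, hl⟩ := hb
  have hlpos : 0 < hB.1.eigenvalues j := hB.eigenvalues_pos j
  have hllt : hB.1.eigenvalues j < t := by
    rw [← htr, aux_trace hB.1]
    obtain ⟨k, hk⟩ := exists_ne j
    exact Finset.single_lt_sum hk (Finset.mem_univ j) (Finset.mem_univ k)
      (hB.eigenvalues_pos k) (fun m _ _ => (hB.eigenvalues_pos m).le)
  rw [← hab, ← hl, ← hj]
  have h1t : 0 < 1/t := by positivity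
  rw [abs_lt]
  constructor
  · have : (1/t) * hB.1.eigenvalues j < (1/t) * t := (mul_lt_mul_iff_right₀ h1t).2 hllt
    rw [one_div, inv_mul_cancel₀ ht.ne'] at this
    simp only [Units.smul_def, Units.val_mk0, smul_eq_mul]
    rw [one_div]
    linarith
  · have : 0 < (1/t) * hB.1.eigenvalues j := mul_pos h1t hlpos
    simp only [Units.smul_def, Units.val_mk0, smul_eq_mul]
    linarith

/-- For invertible `A ∈ ℝ^{n×n}` with `n ≥ 2`, the initialization
`X₀ = Aᵀ / Tr(AᵀA)` for Newton–Schulz satisfies `‖I − AX₀‖₂ < 1`. -/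
theorem stmt_13 {n : ℕ} (hn : 2 ≤ n) (A : Matrix (Fin n) (Fin n) ℝ) (hA : IsUnit A) :
    ‖(1 : Matrix (Fin n) (Fin n) ℝ) - A * ((1 / (Aᵀ * A).trace) • Aᵀ)‖ < 1 := by
  have := NeZero.of_pos (lt_of_lt_of_le two_pos hn)
  set t := (Aᵀ * A).trace with htdef
  set B := A * Aᵀ with hBdef
  have hB : B.PosDef := aux_posdef A hA
  have htr : B.trace = t := Matrix.trace_mul_comm A Aᵀ
  have ht : 0 < t := by
    rw [← htr, aux_trace hB.1]
    exact Finset.sum_pos (fun i _ => hB.eigenvalues_pos i) Finset.univ_nonempty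
  have hrw : A * ((1/t) • Aᵀ) = (1/t) • B := by
    rw [hBdef, Matrix.mul_smul]
  rw [hrw]
  set M := (1 : Matrix (Fin n) (Fin n) ℝ) - (1/t) • B with hMdef
  have hM : M.IsHermitian := by
    rw [hMdef]
    have hsm : ((1/t : ℝ) • B).IsHermitian := by
      unfold Matrix.IsHermitian
      rw [Matrix.conjTranspose_smul, hB.1]
      simp
    exact Matrix.isHermitian_one.sub hsm
  have heig : ∀ i, |hM.eigenvalues i| < 1 := aux_eig_bound hn hB ht htr hMdef hM
  set c := Finset.univ.sup' Finset.univ_nonempty (fun i => |hM.eigenvalues i|) with hc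
  have hle : ∀ i, |hM.eigenvalues i| ≤ c := fun i =>
    Finset.le_sup' (fun i => |hM.eigenvalues i|) (Finset.mem_univ i)
  have hc0 : 0 ≤ c := le_trans (abs_nonneg _) (hle (Classical.arbitrary _))
  have hclt : c < 1 := Finset.sup'_lt_iff Finset.univ_nonempty |>.2 fun i _ => heig i
  exact lt_of_le_of_lt (aux_norm_le M hM hc0 hle) hclt
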